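/- Let m ≥ 1 be a natural number and let α, β, σ be real numbers with 0 ≤ α ≤ 1 and σ > 0. Let J be the m×m all-ones real matrix and let K̂ be the (2m)×(2m) block matrix K̂ = [[J, αJ], [αJ, J]] + σ² I, indexed by Fin m ⊕ Fin m. Let v be the vector whose first m entries equal −β and whose last m entries equal β. Then K̂ is invertible and v ⬝ᵥ (K̂⁻¹ ·ᵥ v) = 2 m β² / ( m(1 − α) + σ² ). -/

import Mathlib

open Matrix

/-- Quadratic form of the inverse regularized block kernel matrix with the central-differencing
cross-covariance vector `v = (-β, …, -β, β, …, β)`: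
`v ⬝ᵥ K̂⁻¹ v = 2mβ²/(m(1-α)+σ²)`. -/
theorem central_diff_quadratic_form (m : ℕ) (hm : 1 ≤ m) (α β σ : ℝ)
    (hα0 : 0 ≤ α) (hα1 : α ≤ 1) (hσ : 0 < σ)
    (J : Matrix (Fin m) (Fin m) ℝ) (hJ : J = Matrix.of fun _ _ => (1 : ℝ))
    (Khat : Matrix (Fin m ⊕ Fin m) (Fin m ⊕ Fin m) ℝ)
    (hKhat : Khat = Matrix.fromBlocks J (α • J) (α • J) J + σ ^ 2 • (1 : Matrix (Fin m ⊕ Fin m) (Fin m ⊕ Fin m) ℝ))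
    (v : Fin m ⊕ Fin m → ℝ)
    (hv : v = Sum.elim (fun _ => -β) (fun _ => β)) :
    IsUnit Khat.det ∧
      v ⬝ᵥ (Khat⁻¹.mulVec v) = 2 * (m : ℝ) * β ^ 2 / ((m : ℝ) * (1 - α) + σ ^ 2) := by
  have hσ2 : (0:ℝ) < σ ^ 2 := by positivity
  set lam : ℝ := (m : ℝ) * (1 - α) + σ ^ 2 with hlam
  have hm' : (1:ℝ) ≤ (m:ℝ) := by exact_mod_cast hm
  have hlampos : 0 < lam := by nlinarith
  -- mulVec computation on general vectors
  have hmul : ∀ x : Fin m ⊕ Fin m → ℝ, ∀ i,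
      Khat.mulVec x i =
        (∑ j, x (Sum.inl j)) * (Sum.elim (fun _ => (1:ℝ)) (fun _ => α) i)
        + (∑ j, x (Sum.inr j)) * (Sum.elim (fun _ => α) (fun _ => (1:ℝ)) i)
        + σ ^ 2 * x i := by
    intro x i
    rw [hKhat, hJ]
    cases i with
    | inl i =>
      simp [Matrix.mulVec, dotProduct, Fintype.sum_sum_type, Matrix.one_apply,
        Finset.mul_sum, mul_comm]
      simp [add_mul, one_mul, Finset.sum_add_distrib, ite_mul, zero_mul, Finset.sum_ite_eq]
      ring
    | inr i =>
      simp [Matrix.mulVec, dotProduct, Fintype.sum_sum_type, Matrix.one_apply,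
        Finset.mul_sum, mul_comm]
      simp [add_mul, one_mul, Finset.sum_add_distrib, ite_mul, zero_mul, Finset.sum_ite_eq]
      ring
  -- positive definiteness
  have hherm : Khat.IsHermitian := by
    rw [hKhat, hJ]
    ext i j
    cases i <;> cases j <;>
      simp [Matrix.conjTranspose_apply, Matrix.one_apply, eq_comm] <;> ring_nf <;>
      simp [Matrix.one_apply, eq_comm]
  have hpd : Khat.PosDef := by
    refine Matrix.PosDef.of_dotProduct_mulVec_pos hherm fun x hx => ?_
    have hquad : star x ⬝ᵥ Khat.mulVec x =
        (∑ j, x (Sum.inl j)) ^ 2 + (∑ j, x (Sum.inr j)) ^ 2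
        + 2 * α * (∑ j, x (Sum.inl j)) * (∑ j, x (Sum.inr j))
        + σ ^ 2 * (∑ i, x i ^ 2) := by
      simp only [dotProduct, Pi.star_apply, star_trivial]
      rw [Fintype.sum_sum_type]
      simp only [hmul, Sum.elim_inl, Sum.elim_inr]
      rw [Fintype.sum_sum_type]
      simp only [mul_add, Finset.sum_add_distrib, ← Finset.sum_mul, ← Finset.mul_sum]
      ring_nf
      simp [Finset.mul_sum, mul_comm]
    rw [hquad]
    set s1 := ∑ j, x (Sum.inl j)
    set s2 := ∑ j, x (Sum.inr j)
    have hsum : 0 < ∑ i, x i ^ 2 := by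
      have : ∃ i, x i ≠ 0 := by
        by_contra h
        push_neg at h
        exact hx (funext h)
      obtain ⟨i, hi⟩ := this
      have : 0 < x i ^ 2 := by positivity
      exact lt_of_lt_of_le this (Finset.single_le_sum (fun j _ => sq_nonneg (x j)) (Finset.mem_univ i))
    nlinarith [sq_nonneg (s1 + s2), sq_nonneg (s1 - s2)]
  have hunit : IsUnit Khat.det := isUnit_iff_ne_zero.mpr (ne_of_gt hpd.det_pos)
  refine ⟨hunit, ?_⟩
  -- eigenvector property
  have hsum1 : (∑ _j : Fin m, -β) = -((m:ℝ) * β) := by simp [mul_comm]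
  have hsum2 : (∑ _j : Fin m, β) = (m:ℝ) * β := by simp [mul_comm]
  have heig : Khat.mulVec v = lam • v := by
    funext i
    rw [hmul v i]
    cases i <;> simp [hv, hsum1, hsum2, hlam] <;> try ring
  have hinv : Khat⁻¹.mulVec v = lam⁻¹ • v := by
    have h1 : Khat⁻¹.mulVec (Khat.mulVec v) = v := by
      rw [Matrix.mulVec_mulVec, Matrix.nonsing_inv_mul _ hunit, Matrix.one_mulVec]
    rw [heig, Matrix.mulVec_smul] at h1
    have := congrArg (fun w => lam⁻¹ • w) h1
    simpa [smul_smul, inv_mul_cancel₀ (ne_of_gt hlampos)] using this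
  rw [hinv]
  have hvv : v ⬝ᵥ v = 2 * (m:ℝ) * β ^ 2 := by
    simp [dotProduct, hv, Fintype.sum_sum_type]
    ring
  rw [dotProduct_smul, smul_eq_mul, hvv]
  field_simp
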